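/- For every c > 0, I_S := ((u+cv)/(c²D²)) ∫₀^{X−1} ((x − Mc(1+x))³/(1+x)³) φ_{cM(1+x), c²D²(1+x)/(u+cv)}(x) dx = −(3c²D²/(u+cv))·[Φ(A(x)) + exp(2λ(1−cM))·Φ(B(x))]|₁^X + 2(1−cM)·(3 − 4λ(1−cM))·exp(2λ(1−cM))·[Φ(B(x))]|₁^X − [(√2·cD/(√π·√(u+cv)·x^{3/2}))·(3(1 − λ(1−cM))x + λ)·exp(−(u+cv)(x(1−cM)−1)²/(2x c²D²))]|₁^X, where [g(x)]|₁^X denotes g(X) − g(1). -/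

import Mathlib

open MeasureTheory Real

/-- Standard normal cumulative distribution function. -/
noncomputable def stdNormalCDF (x : ℝ) : ℝ :=
  ∫ t in Set.Iic x, (Real.sqrt (2 * Real.pi))⁻¹ * Real.exp (-t ^ 2 / 2)

/-- P.d.f. of the normal distribution with mean `m` and variance `s2`. -/
noncomputable def normalPdf (m s2 x : ℝ) : ℝ :=
  (Real.sqrt (2 * Real.pi * s2))⁻¹ * Real.exp (-(x - m) ^ 2 / (2 * s2))

/-- `A(x) = (√(u+cv)/(cD√x))·(x(1−cM) − 1)`. -/
noncomputable def Afun (u c v M D x : ℝ) : ℝ :=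
  Real.sqrt (u + c * v) / (c * D * Real.sqrt x) * (x * (1 - c * M) - 1)

/-- `B(x) = −(√(u+cv)/(cD√x))·(1 + x(1−cM))`. -/
noncomputable def Bfun (u c v M D x : ℝ) : ℝ :=
  -(Real.sqrt (u + c * v) / (c * D * Real.sqrt x)) * (1 + x * (1 - c * M))

/-- The boundary term
`(√2·cD/(√π·√(u+cv)·x^{3/2}))·(3(1 − λ(1−cM))x + λ)·exp(−(u+cv)(x(1−cM)−1)²/(2x c²D²))`,
where `λ = (u+cv)/(c²D²)`. -/
noncomputable def Hfun (u c v M D x : ℝ) : ℝ :=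
  Real.sqrt 2 * c * D / (Real.sqrt Real.pi * Real.sqrt (u + c * v) * x ^ ((3:ℝ)/2)) *
    (3 * (1 - ((u + c * v) / (c ^ 2 * D ^ 2)) * (1 - c * M)) * x
        + (u + c * v) / (c ^ 2 * D ^ 2)) *
    Real.exp (-((u + c * v) * (x * (1 - c * M) - 1) ^ 2) / (2 * x * (c ^ 2 * D ^ 2)))

lemma stdGaussian_integrable :
    Integrable (fun t : ℝ => (Real.sqrt (2 * Real.pi))⁻¹ * Real.exp (-t ^ 2 / 2)) := by
  have h := (integrable_exp_neg_mul_sq (show (0:ℝ) < 1/2 by norm_num)).const_mul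
      (Real.sqrt (2 * Real.pi))⁻¹
  refine h.congr ?_
  filter_upwards with t
  ring_nf

lemma hasDerivAt_stdNormalCDF (y : ℝ) :
    HasDerivAt stdNormalCDF ((Real.sqrt (2 * Real.pi))⁻¹ * Real.exp (-y ^ 2 / 2)) y := by
  set φ : ℝ → ℝ := fun t => (Real.sqrt (2 * Real.pi))⁻¹ * Real.exp (-t ^ 2 / 2) with hφ
  have hint : Integrable φ := stdGaussian_integrable
  have hkey : ∀ z : ℝ, stdNormalCDF z = stdNormalCDF 0 + ∫ t in (0:ℝ)..z, φ t := by
    intro z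
    have := intervalIntegral.integral_Iic_sub_Iic (f := φ) (μ := volume)
      (hint.integrableOn) (hint.integrableOn) (a := 0) (b := z)
    unfold stdNormalCDF
    rw [intervalIntegral.intervalIntegral_eq_integral_uIoc] at this ⊢
    · linarith [this]
  have hd : HasDerivAt (fun z => stdNormalCDF 0 + ∫ t in (0:ℝ)..z, φ t) (φ y) y := by
    have : HasDerivAt (fun z => ∫ t in (0:ℝ)..z, φ t) (φ y) y :=
      (intervalIntegral.integral_hasDerivAt_right (a := 0) (b := y)
      (hint.intervalIntegrable)
      (hint.1.stronglyMeasurableAtFilter)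
      (Continuous.continuousAt (continuous_const.mul (((continuous_pow 2).neg.div_const 2).rexp))))
    exact this.const_add _
  have : stdNormalCDF = fun z => stdNormalCDF 0 + ∫ t in (0:ℝ)..z, φ t := funext hkey
  rw [this]
  exact hd

lemma Hfun_eq (u c v M D : ℝ) (ha : 0 < u + c*v) (hc : 0 < c) (hD : 0 < D)
    (y : ℝ) (hy : 0 < y) :
    Hfun u c v M D y =
      2 * c * D / (Real.sqrt 2 * Real.sqrt Real.pi * Real.sqrt (u + c*v)) *
        ((3 * (1 - ((u + c*v)/(c^2*D^2)) * (1 - c*M)) * y + (u + c*v)/(c^2*D^2))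
          / (y * Real.sqrt y)) *
        Real.exp (-((u + c * v) * (y * (1 - c * M) - 1) ^ 2) / (2 * y * (c ^ 2 * D ^ 2))) := by
  unfold Hfun
  rw [show y ^ ((3:ℝ)/2) = y * Real.sqrt y by
    rw [show (3:ℝ)/2 = 1 + 1/2 by norm_num, Real.rpow_add hy, Real.rpow_one,
      ← Real.sqrt_eq_rpow]]
  have h2 : Real.sqrt 2 * Real.sqrt 2 = 2 := Real.mul_self_sqrt (by norm_num)
  have hπ : (0:ℝ) < Real.sqrt Real.pi := Real.sqrt_pos.2 Real.pi_pos
  have hsy : (0:ℝ) < Real.sqrt y := Real.sqrt_pos.2 hy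
  have hsa : (0:ℝ) < Real.sqrt (u+c*v) := Real.sqrt_pos.2 ha
  generalize Real.exp (-((u + c * v) * (y * (1 - c * M) - 1) ^ 2) / (2 * y * (c ^ 2 * D ^ 2))) = E
  field_simp
  ring_nf
  rw [Real.sq_sqrt (by norm_num : (0:ℝ) ≤ 2)]
  ring

set_option maxHeartbeats 4000000 in
lemma hasDerivAt_G (u c v M D : ℝ) (ha : 0 < u + c * v) (hc : 0 < c) (hD : 0 < D)
    (w : ℝ) (hw : 0 < w) :
    HasDerivAt (fun x =>
      -(3 * (c ^ 2 * D ^ 2) / (u + c * v)) *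
          (stdNormalCDF (Afun u c v M D x)
            + Real.exp (2 * ((u + c * v) / (c ^ 2 * D ^ 2)) * (1 - c * M))
                * stdNormalCDF (Bfun u c v M D x))
        + 2 * (1 - c * M) * (3 - 4 * ((u + c * v) / (c ^ 2 * D ^ 2)) * (1 - c * M)) *
            Real.exp (2 * ((u + c * v) / (c ^ 2 * D ^ 2)) * (1 - c * M)) *
            stdNormalCDF (Bfun u c v M D x)
        - Hfun u c v M D x)
      (((u + c * v) / (c ^ 2 * D ^ 2)) *
        ((w * (1 - c * M) - 1) ^ 3 / w ^ 3 *
          normalPdf (c * M * w) (c ^ 2 * D ^ 2 * w / (u + c * v)) (w - 1))) w := by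
  have hk : (0:ℝ) < c * D := mul_pos hc hD
  have hsw : 0 < Real.sqrt w := Real.sqrt_pos.2 hw
  have hsa : 0 < Real.sqrt (u + c * v) := Real.sqrt_pos.2 ha
  have hsqrt : HasDerivAt (fun x : ℝ => Real.sqrt x) (1 / (2 * Real.sqrt w)) w :=
    Real.hasDerivAt_sqrt hw.ne'
  have hA := ((hasDerivAt_const w (Real.sqrt (u + c * v))).div (hsqrt.const_mul (c * D))
      (by positivity)).mul (((hasDerivAt_id w).mul_const (1 - c * M)).sub_const 1)
  have hB := (((hasDerivAt_const w (Real.sqrt (u + c * v))).div (hsqrt.const_mul (c * D))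
      (by positivity)).neg).mul (((hasDerivAt_id w).mul_const (1 - c * M)).const_add 1)
  have hΦA := (hasDerivAt_stdNormalCDF (Afun u c v M D w)).comp w hA
  have hΦB := (hasDerivAt_stdNormalCDF (Bfun u c v M D w)).comp w hB
  have hnum :=
    ((hasDerivAt_id w).const_mul
      (3 * (1 - ((u + c * v) / (c ^ 2 * D ^ 2)) * (1 - c * M)))).add_const ((u + c * v) / (c ^ 2 * D ^ 2))
  have hden := (hasDerivAt_id w).mul hsqrt
  have hinner :=
    ((((((hasDerivAt_id w).mul_const (1 - c * M)).sub_const 1).pow 2).const_mul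
        (u + c * v)).neg).div
      (((hasDerivAt_id w).const_mul 2).mul_const (c ^ 2 * D ^ 2)) (by positivity)
  have hH :=
    ((hnum.div hden (mul_pos hw hsw).ne').const_mul
      (2 * c * D / (Real.sqrt 2 * Real.sqrt Real.pi * Real.sqrt (u + c * v)))).mul hinner.exp
  have main := (((hΦA.add (hΦB.const_mul
      (Real.exp (2 * ((u + c * v) / (c ^ 2 * D ^ 2)) * (1 - c * M))))).const_mul
      (-(3 * (c ^ 2 * D ^ 2) / (u + c * v)))).add (hΦB.const_mul
      (2 * (1 - c * M) * (3 - 4 * ((u + c * v) / (c ^ 2 * D ^ 2)) * (1 - c * M)) *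
        Real.exp (2 * ((u + c * v) / (c ^ 2 * D ^ 2)) * (1 - c * M))))).sub hH
  have hev : (fun x : ℝ =>
      -(3 * (c ^ 2 * D ^ 2) / (u + c * v)) *
          (stdNormalCDF (Afun u c v M D x)
            + Real.exp (2 * ((u + c * v) / (c ^ 2 * D ^ 2)) * (1 - c * M))
                * stdNormalCDF (Bfun u c v M D x))
        + 2 * (1 - c * M) * (3 - 4 * ((u + c * v) / (c ^ 2 * D ^ 2)) * (1 - c * M)) *
            Real.exp (2 * ((u + c * v) / (c ^ 2 * D ^ 2)) * (1 - c * M)) *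
            stdNormalCDF (Bfun u c v M D x)
        - Hfun u c v M D x) =ᶠ[nhds w]
      (fun x : ℝ =>
      -(3 * (c ^ 2 * D ^ 2) / (u + c * v)) *
          (stdNormalCDF (Afun u c v M D x)
            + Real.exp (2 * ((u + c * v) / (c ^ 2 * D ^ 2)) * (1 - c * M))
                * stdNormalCDF (Bfun u c v M D x))
        + 2 * (1 - c * M) * (3 - 4 * ((u + c * v) / (c ^ 2 * D ^ 2)) * (1 - c * M)) *
            Real.exp (2 * ((u + c * v) / (c ^ 2 * D ^ 2)) * (1 - c * M)) *
            stdNormalCDF (Bfun u c v M D x)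
        - 2 * c * D / (Real.sqrt 2 * Real.sqrt Real.pi * Real.sqrt (u + c * v)) *
        ((3 * (1 - ((u + c * v) / (c ^ 2 * D ^ 2)) * (1 - c * M)) * x
            + (u + c * v) / (c ^ 2 * D ^ 2)) / (x * Real.sqrt x)) *
        Real.exp (-((u + c * v) * (x * (1 - c * M) - 1) ^ 2)
          / (2 * x * (c ^ 2 * D ^ 2)))) := by
    filter_upwards [eventually_gt_nhds hw] with x hx
    rw [Hfun_eq u c v M D ha hc hD x hx]
  refine HasDerivAt.congr_deriv (HasDerivAt.congr_of_eventuallyEq main hev) ?_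
  simp only [id_eq, Pi.div_apply, Pi.mul_apply, Pi.neg_apply, Pi.pow_apply]
  have hs2 : (0:ℝ) < Real.sqrt 2 := Real.sqrt_pos.2 (by norm_num)
  have hsπ : (0:ℝ) < Real.sqrt Real.pi := Real.sqrt_pos.2 Real.pi_pos
  have e1 : Real.exp (-Afun u c v M D w ^ 2 / 2)
      = Real.exp (2 * ((u + c * v) / (c ^ 2 * D ^ 2)) * (1 - c * M)) *
        Real.exp (-Bfun u c v M D w ^ 2 / 2) := by
    rw [← Real.exp_add]
    congr 1
    unfold Afun Bfun
    have h1 : Real.sqrt w ^ 2 = w := Real.sq_sqrt hw.le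
    have h2 : Real.sqrt (u + c * v) ^ 2 = u + c * v := Real.sq_sqrt ha.le
    generalize Real.sqrt w = sw at h1 hsw ⊢
    rw [← h1]
    generalize Real.sqrt (u + c * v) = sa at h2 hsa ⊢
    rw [← h2]
    field_simp
    ring
  have e2 : Real.exp (-((u + c * v) * (w * (1 - c * M) - 1) ^ 2) / (2 * w * (c ^ 2 * D ^ 2)))
      = Real.exp (2 * ((u + c * v) / (c ^ 2 * D ^ 2)) * (1 - c * M)) *
        Real.exp (-Bfun u c v M D w ^ 2 / 2) := by
    rw [← Real.exp_add]
    congr 1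
    unfold Bfun
    have h1 : Real.sqrt w ^ 2 = w := Real.sq_sqrt hw.le
    have h2 : Real.sqrt (u + c * v) ^ 2 = u + c * v := Real.sq_sqrt ha.le
    generalize Real.sqrt w = sw at h1 hsw ⊢
    rw [← h1]
    generalize Real.sqrt (u + c * v) = sa at h2 hsa ⊢
    rw [← h2]
    field_simp
    ring
  have e3 : Real.exp (-(w - 1 - c * M * w) ^ 2 / (2 * (c ^ 2 * D ^ 2 * w / (u + c * v))))
      = Real.exp (2 * ((u + c * v) / (c ^ 2 * D ^ 2)) * (1 - c * M)) *
        Real.exp (-Bfun u c v M D w ^ 2 / 2) := by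
    rw [← Real.exp_add]
    congr 1
    unfold Bfun
    have h1 : Real.sqrt w ^ 2 = w := Real.sq_sqrt hw.le
    have h2 : Real.sqrt (u + c * v) ^ 2 = u + c * v := Real.sq_sqrt ha.le
    generalize Real.sqrt w = sw at h1 hsw ⊢
    rw [← h1]
    generalize Real.sqrt (u + c * v) = sa at h2 hsa ⊢
    rw [← h2]
    field_simp
    ring
  have e4 : Real.sqrt (2 * Real.pi * (c ^ 2 * D ^ 2 * w / (u + c * v)))
      = Real.sqrt 2 * Real.sqrt Real.pi * (c * D) * Real.sqrt w / Real.sqrt (u + c * v) := by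
    rw [← Real.sqrt_sq (show (0:ℝ) ≤ Real.sqrt 2 * Real.sqrt Real.pi * (c * D) * Real.sqrt w
        / Real.sqrt (u + c * v) by positivity)]
    congr 1
    rw [div_pow, mul_pow, mul_pow, mul_pow, Real.sq_sqrt (by norm_num : (0:ℝ) ≤ 2),
      Real.sq_sqrt Real.pi_pos.le, Real.sq_sqrt hw.le, Real.sq_sqrt ha.le]
    field_simp
  have e8 : Real.sqrt (2 * Real.pi) = Real.sqrt 2 * Real.sqrt Real.pi :=
    Real.sqrt_mul (by norm_num) _
  unfold normalPdf
  rw [e1, e2, e3, e4, e8]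
  generalize Real.exp (-Bfun u c v M D w ^ 2 / 2) = t2
  generalize Real.exp (2 * ((u + c * v) / (c ^ 2 * D ^ 2)) * (1 - c * M)) = t1
  have h1 : Real.sqrt w ^ 2 = w := Real.sq_sqrt hw.le
  have h2 : Real.sqrt (u + c * v) ^ 2 = u + c * v := Real.sq_sqrt ha.le
  generalize Real.sqrt w = sw at h1 hsw ⊢
  rw [← h1]
  generalize Real.sqrt (u + c * v) = sa at h2 hsa ⊢
  rw [← h2]
  field_simp
  ring


set_option maxHeartbeats 1000000 in
/-- Explicit expression for `I_S` for every `c > 0`. -/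
theorem IS_eq (u c v t M D : ℝ)
    (hu : 0 < u) (hc : 0 < c) (hv : 0 ≤ v) (ht : v < t) (hM : 0 < M) (hD : 0 < D) :
    ((u + c * v) / (c ^ 2 * D ^ 2)) *
        ∫ x in (0:ℝ)..(c * (t - v) / (u + c * v)),
          (x - M * c * (1 + x)) ^ 3 / (1 + x) ^ 3 *
            normalPdf (c * M * (1 + x)) (c ^ 2 * D ^ 2 * (1 + x) / (u + c * v)) x
      = -(3 * (c ^ 2 * D ^ 2) / (u + c * v)) *
          ((stdNormalCDF (Afun u c v M D (c * (t - v) / (u + c * v) + 1))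
              + Real.exp (2 * ((u + c * v) / (c ^ 2 * D ^ 2)) * (1 - c * M))
                  * stdNormalCDF (Bfun u c v M D (c * (t - v) / (u + c * v) + 1)))
            - (stdNormalCDF (Afun u c v M D 1)
              + Real.exp (2 * ((u + c * v) / (c ^ 2 * D ^ 2)) * (1 - c * M))
                  * stdNormalCDF (Bfun u c v M D 1)))
        + 2 * (1 - c * M) *
            (3 - 4 * ((u + c * v) / (c ^ 2 * D ^ 2)) * (1 - c * M)) *
            Real.exp (2 * ((u + c * v) / (c ^ 2 * D ^ 2)) * (1 - c * M)) *
            (stdNormalCDF (Bfun u c v M D (c * (t - v) / (u + c * v) + 1))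
              - stdNormalCDF (Bfun u c v M D 1))
        - (Hfun u c v M D (c * (t - v) / (u + c * v) + 1) - Hfun u c v M D 1) := by
  have ha : 0 < u + c * v := by nlinarith [mul_nonneg hc.le hv]
  set s := c * (t - v) / (u + c * v) with hsdef
  have hs : 0 < s := div_pos (mul_pos hc (sub_pos.2 ht)) ha
  have hderiv : ∀ x ∈ Set.uIcc (0:ℝ) s, HasDerivAt
      (fun y : ℝ => -(3 * (c ^ 2 * D ^ 2) / (u + c * v)) *
          (stdNormalCDF (Afun u c v M D (y + 1))
            + Real.exp (2 * ((u + c * v) / (c ^ 2 * D ^ 2)) * (1 - c * M))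
                * stdNormalCDF (Bfun u c v M D (y + 1)))
        + 2 * (1 - c * M) * (3 - 4 * ((u + c * v) / (c ^ 2 * D ^ 2)) * (1 - c * M)) *
            Real.exp (2 * ((u + c * v) / (c ^ 2 * D ^ 2)) * (1 - c * M)) *
            stdNormalCDF (Bfun u c v M D (y + 1))
        - Hfun u c v M D (y + 1))
      ((u + c * v) / (c ^ 2 * D ^ 2) *
        ((x - M * c * (1 + x)) ^ 3 / (1 + x) ^ 3 *
          normalPdf (c * M * (1 + x)) (c ^ 2 * D ^ 2 * (1 + x) / (u + c * v)) x)) x := by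
    intro x hx
    rw [Set.uIcc_of_le hs.le] at hx
    have hw : 0 < x + 1 := by linarith [hx.1]
    have h := (hasDerivAt_G u c v M D ha hc hD (x + 1) hw).comp x
      ((hasDerivAt_id x).add_const 1)
    refine HasDerivAt.congr_deriv h ?_
    rw [mul_one, show x + 1 - 1 = x from by ring]
    ring_nf
  have hcont : ContinuousOn (fun x : ℝ => (u + c * v) / (c ^ 2 * D ^ 2) *
        ((x - M * c * (1 + x)) ^ 3 / (1 + x) ^ 3 *
          normalPdf (c * M * (1 + x)) (c ^ 2 * D ^ 2 * (1 + x) / (u + c * v)) x))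
      (Set.uIcc 0 s) := by
    rw [Set.uIcc_of_le hs.le]
    apply ContinuousOn.mul continuousOn_const
    apply ContinuousOn.mul
    · exact ContinuousOn.div (by fun_prop) (by fun_prop)
        (fun x hx => by have := hx.1; positivity)
    · unfold normalPdf
      apply ContinuousOn.mul
      · apply ContinuousOn.inv₀
        · exact (Real.continuous_sqrt.comp (by fun_prop)).continuousOn
        · intro x hx
          have hx1 : (0:ℝ) < 1 + x := by have := hx.1; linarith
          have : (0:ℝ) < 2 * Real.pi * (c ^ 2 * D ^ 2 * (1 + x) / (u + c * v)) := by
            have := Real.pi_pos; positivity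
          exact (Real.sqrt_pos.2 this).ne'
      · apply Real.continuous_exp.comp_continuousOn
        apply ContinuousOn.div (by fun_prop) (by fun_prop)
        intro x hx
        have hx1 : (0:ℝ) < 1 + x := by have := hx.1; linarith
        positivity
  have hFTC := intervalIntegral.integral_eq_sub_of_hasDerivAt hderiv
    (hcont.intervalIntegrable)
  rw [← intervalIntegral.integral_const_mul, hFTC]
  norm_num
  ring
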